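/- Let Γ be a reduced injective LOT that is not prime. Then either Γ contains a complete set of sub-LOTs, or Γ freely decomposes as Γ = Γ_L ∪ Γ_R with Γ_L, Γ_R proper sub-LOTs intersecting in a single vertex. -/

import Mathlib

/-- A labeled oriented graph (LOG): an oriented graph whose edges are labeled by vertices.
A labeled oriented tree (LOT) is a LOG satisfying `IsTree`. -/
structure LOG where
  V : Type
  E : Type
  src : E → V
  tgt : E → V
  lab : E → V

namespace LOG

variable (G : LOG)

/-- Adjacency in the underlying undirected graph. -/
def Adj (v w : G.V) : Prop :=
  ∃ e, (G.src e = v ∧ G.tgt e = w) ∨ (G.src e = w ∧ G.tgt e = v)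

/-- Adjacency using only edges from `S`. -/
def AdjOn (S : Set G.E) (v w : G.V) : Prop :=
  ∃ e ∈ S, (G.src e = v ∧ G.tgt e = w) ∨ (G.src e = w ∧ G.tgt e = v)

/-- The vertices incident to an edge set. -/
def verts (S : Set G.E) : Set G.V := {v | ∃ e ∈ S, G.src e = v ∨ G.tgt e = v}

/-- Connectivity of the subgraph spanned by the edge set `S`. -/
def ConnOn (S : Set G.E) : Prop :=
  ∀ v ∈ G.verts S, ∀ w ∈ G.verts S, Relation.ReflTransGen (G.AdjOn S) v w

/-- The underlying graph is a finite tree: connected, without loops or multiple edges,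
and with one more vertex than edges. -/
def IsTree : Prop :=
  Finite G.V ∧ Finite G.E ∧ Nonempty G.V ∧
  (∀ v w : G.V, Relation.ReflTransGen G.Adj v w) ∧
  (∀ e, G.src e ≠ G.tgt e) ∧
  (∀ e e', ({G.src e, G.tgt e} : Set G.V) = {G.src e', G.tgt e'} → e = e') ∧
  Nat.card G.V = Nat.card G.E + 1

/-- No edge is labeled with one of its own endpoints. -/
def Compressed : Prop := ∀ e, G.lab e ≠ G.src e ∧ G.lab e ≠ G.tgt e

/-- Each vertex occurs as an edge label at most once. -/
def Inj : Prop := ∀ e e', G.lab e = G.lab e' → e = e'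

/-- A leaf (boundary vertex): a vertex incident with exactly one edge. -/
def IsLeaf (v : G.V) : Prop := {e | G.src e = v ∨ G.tgt e = v}.ncard = 1

/-- Every boundary vertex occurs as an edge label. -/
def BoundaryReduced : Prop := ∀ v, G.IsLeaf v → ∃ e, G.lab e = v

/-- Reduced: compressed and boundary reduced. -/
def Reduced : Prop := G.Compressed ∧ G.BoundaryReduced

/-- A sub-LOT, given by a nonempty connected set of edges all of whose labels are
vertices of the subgraph. -/
def IsSubLOT (S : Set G.E) : Prop :=
  S.Nonempty ∧ G.ConnOn S ∧ ∀ e ∈ S, G.lab e ∈ G.verts S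

/-- A proper sub-LOT. -/
def ProperSubLOT (S : Set G.E) : Prop := G.IsSubLOT S ∧ S ≠ Set.univ

/-- A maximal proper sub-LOT. -/
def MaxProperSubLOT (S : Set G.E) : Prop :=
  G.ProperSubLOT S ∧ ∀ T, G.ProperSubLOT T → S ⊆ T → S = T

/-- A prime LOG: one with no proper sub-LOT. -/
def Prime : Prop := ∀ S, ¬ G.ProperSubLOT S

/-- A LOG freely decomposes if it is the union of two proper sub-LOTs meeting in a
single vertex. -/
def FreelyDecomposes : Prop :=
  ∃ (SL SR : Set G.E) (x : G.V), G.ProperSubLOT SL ∧ G.ProperSubLOT SR ∧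
    SL ∪ SR = Set.univ ∧ G.verts SL ∩ G.verts SR = {x}

/-- The map collapsing the vertices of the subgraph spanned by `S` to the vertex `x`. -/
noncomputable def collapseMap (S : Set G.E) (x : G.V) : G.V → G.V :=
  fun v => letI := Classical.dec (v ∈ G.verts S); if v ∈ G.verts S then x else v

/-- The quotient LOG obtained by collapsing the sub-LOT `S` to the vertex `x`
(the vertex of `S` not occurring as an edge label of `S`).  The edges are the edges
outside `S`; endpoints and labels are pushed forward along the collapse map. -/
noncomputable def collapse (S : Set G.E) (x : G.V) : LOG where
  V := G.V
  E := {e : G.E // e ∉ S}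
  src e := G.collapseMap S x (G.src e.1)
  tgt e := G.collapseMap S x (G.tgt e.1)
  lab e := G.collapseMap S x (G.lab e.1)

end LOG

namespace LOG

open Relation Set

variable {G : LOG}

lemma src_mem_verts {S : Set G.E} {e : G.E} (he : e ∈ S) : G.src e ∈ G.verts S :=
  ⟨e, he, Or.inl rfl⟩

lemma tgt_mem_verts {S : Set G.E} {e : G.E} (he : e ∈ S) : G.tgt e ∈ G.verts S :=
  ⟨e, he, Or.inr rfl⟩

lemma verts_mono {S T : Set G.E} (h : S ⊆ T) : G.verts S ⊆ G.verts T :=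
  fun _ ⟨e, he, h2⟩ => ⟨e, h he, h2⟩

lemma AdjOn.mono' {S T : Set G.E} (h : S ⊆ T) {a b : G.V} (hab : G.AdjOn S a b) :
    G.AdjOn T a b := by
  obtain ⟨e, he, h2⟩ := hab; exact ⟨e, h he, h2⟩

lemma AdjOn.symm' {S : Set G.E} {a b : G.V} (hab : G.AdjOn S a b) : G.AdjOn S b a := by
  obtain ⟨e, he, h2⟩ := hab; exact ⟨e, he, h2.symm⟩

lemma AdjOn.left_mem {S : Set G.E} {a b : G.V} (hab : G.AdjOn S a b) : a ∈ G.verts S := by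
  obtain ⟨e, he, h2⟩ := hab
  rcases h2 with ⟨h1, _⟩ | ⟨h1, h2⟩
  · exact ⟨e, he, Or.inl h1⟩
  · exact ⟨e, he, Or.inr h2⟩

lemma AdjOn.right_mem {S : Set G.E} {a b : G.V} (hab : G.AdjOn S a b) : b ∈ G.verts S :=
  hab.symm'.left_mem

lemma rtg_mono {S T : Set G.E} (h : S ⊆ T) {a b : G.V}
    (hab : ReflTransGen (G.AdjOn S) a b) : ReflTransGen (G.AdjOn T) a b :=
  ReflTransGen.mono (fun _ _ hab => hab.mono' h) _ _ hab

lemma rtg_symm {S : Set G.E} {a b : G.V} (hab : ReflTransGen (G.AdjOn S) a b) :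
    ReflTransGen (G.AdjOn S) b a :=
  by haveI : Std.Symm (G.AdjOn S) := ⟨fun _ _ h => h.symm'⟩; exact Std.Symm.symm _ _ hab

lemma verts_union {S T : Set G.E} : G.verts (S ∪ T) = G.verts S ∪ G.verts T := by
  ext v
  constructor
  · rintro ⟨e, he | he, h2⟩
    · exact Or.inl ⟨e, he, h2⟩
    · exact Or.inr ⟨e, he, h2⟩
  · rintro (⟨e, he, h2⟩ | ⟨e, he, h2⟩)
    · exact ⟨e, Or.inl he, h2⟩
    · exact ⟨e, Or.inr he, h2⟩

lemma verts_insert {S : Set G.E} {e : G.E} :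
    G.verts (insert e S) = {G.src e, G.tgt e} ∪ G.verts S := by
  ext v
  constructor
  · rintro ⟨f, hf | hf, h2⟩
    · subst hf; rcases h2 with h | h
      · exact Or.inl (Or.inl h.symm)
      · exact Or.inl (Or.inr h.symm)
    · exact Or.inr ⟨f, hf, h2⟩
  · rintro ((h | h) | ⟨f, hf, h2⟩)
    · exact ⟨e, Or.inl rfl, Or.inl h.symm⟩
    · exact ⟨e, Or.inl rfl, Or.inr h.symm⟩
    · exact ⟨f, Or.inr hf, h2⟩

/-- Connectivity is preserved when inserting an edge attached to the vertex set. -/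
lemma connOn_insert {S : Set G.E} {e : G.E} (hconn : G.ConnOn S)
    (hev : G.src e ∈ G.verts S ∨ G.tgt e ∈ G.verts S) : G.ConnOn (insert e S) := by
  -- every vertex of verts (insert e S) connects to every vertex of verts S
  have hstep : ∀ v ∈ G.verts (insert e S), ∀ w ∈ G.verts S,
      ReflTransGen (G.AdjOn (insert e S)) v w := by
    intro v hv w hw
    rw [verts_insert] at hv
    rcases hv with (hv | hv) | hv
    · -- v = src e
      subst hv
      rcases hev with h | h
      · exact rtg_mono (subset_insert e S) (hconn _ h _ hw)
      · exact ReflTransGen.head ⟨e, mem_insert e S, Or.inl ⟨rfl, rfl⟩⟩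
          (rtg_mono (subset_insert e S) (hconn _ h _ hw))
    · subst hv
      rcases hev with h | h
      · exact ReflTransGen.head ⟨e, mem_insert e S, Or.inr ⟨rfl, rfl⟩⟩
          (rtg_mono (subset_insert e S) (hconn _ h _ hw))
      · exact rtg_mono (subset_insert e S) (hconn _ h _ hw)
    · exact rtg_mono (subset_insert e S) (hconn _ hv _ hw)
  intro v hv w hw
  obtain ⟨a, ha⟩ : (G.verts S).Nonempty := by
    rcases hev with h | h
    exacts [⟨_, h⟩, ⟨_, h⟩]
  exact (hstep v hv a ha).trans (rtg_symm (hstep w hw a ha))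

/-- n-step reachability. -/
def reachN (r : α → α → Prop) (a : α) : ℕ → α → Prop
  | 0, v => v = a
  | n + 1, v => ∃ u, reachN r a n u ∧ r u v

lemma reachN_of_rtg {r : α → α → Prop} {a b : α} (h : ReflTransGen r a b) :
    ∃ n, reachN r a n b := by
  induction h with
  | refl => exact ⟨0, rfl⟩
  | tail _ hbc ih => obtain ⟨n, hn⟩ := ih; exact ⟨n + 1, _, hn, hbc⟩

open Classical in
/-- distance function. -/
noncomputable def distTo (r : α → α → Prop) (a v : α) : ℕ :=
  if h : ∃ n, reachN r a n v then Nat.find h else 0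

lemma distTo_le {r : α → α → Prop} {a v : α} {n : ℕ} (h : reachN r a n v) :
    distTo r a v ≤ n := by
  classical
  rw [distTo, dif_pos ⟨n, h⟩]
  exact Nat.find_le h

lemma reachN_distTo {r : α → α → Prop} {a v : α} (h : ∃ n, reachN r a n v) :
    reachN r a (distTo r a v) v := by
  classical
  rw [distTo, dif_pos h]
  exact Nat.find_spec h

/-- Upper bound: a connected nonempty edge set spans at most one more vertex than edges. -/
lemma ncard_verts_le (hV : Finite G.V) (hE : Finite G.E) {S : Set G.E}
    (hne : S.Nonempty) (hconn : G.ConnOn S) : (G.verts S).ncard ≤ S.ncard + 1 := by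
  classical
  obtain ⟨e₀, he₀⟩ := hne
  set v₀ := G.src e₀ with hv₀def
  have hv₀ : v₀ ∈ G.verts S := src_mem_verts he₀
  set r := G.AdjOn S with hrdef
  set d : G.V → ℕ := distTo r v₀ with hddef
  -- for each non-root vertex, an incident edge whose other endpoint is closer
  have hP : ∀ v : G.V, ∃ e : G.E, (v ∈ G.verts S ∧ v ≠ v₀) →
      e ∈ S ∧ ∃ u, ((G.src e = u ∧ G.tgt e = v) ∨ (G.src e = v ∧ G.tgt e = u)) ∧ d u < d v := by
    intro v
    by_cases hv : v ∈ G.verts S ∧ v ≠ v₀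
    · have hre : ∃ n, reachN r v₀ n v := reachN_of_rtg (hconn v₀ hv₀ v hv.1)
      have hdv : reachN r v₀ (d v) v := reachN_distTo hre
      have hd0 : d v ≠ 0 := by
        intro h0
        rw [h0] at hdv
        exact hv.2 hdv
      obtain ⟨m, hm⟩ := Nat.exists_eq_succ_of_ne_zero hd0
      rw [hm] at hdv
      obtain ⟨u, hu, huv⟩ := hdv
      obtain ⟨e, heS, hor⟩ := huv
      refine ⟨e, fun _ => ⟨heS, u, hor, ?_⟩⟩
      have : d u ≤ m := distTo_le hu
      omega
    · exact ⟨e₀, fun h => absurd h hv⟩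
  choose f hf using hP
  have hmaps : ∀ v ∈ G.verts S \ {v₀}, f v ∈ S := by
    intro v hv
    exact (hf v ⟨hv.1, hv.2⟩).1
  have hinj : Set.InjOn f (G.verts S \ {v₀}) := by
    intro v hv w hw hfvw
    by_contra hne'
    obtain ⟨-, uv, horv, hdv⟩ := hf v ⟨hv.1, hv.2⟩
    obtain ⟨-, uw, horw, hdw⟩ := hf w ⟨hw.1, hw.2⟩
    rw [hfvw] at horv
    -- the edge f w has endpoint pairs (uv, v) and (uw, w)
    rcases horv with ⟨hv1, hv2⟩ | ⟨hv1, hv2⟩ <;> rcases horw with ⟨hw1, hw2⟩ | ⟨hw1, hw2⟩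
    · exact hne' (hv2.symm.trans hw2)
    · -- src = uv = w, tgt = v = uw
      have h1 : uv = w := hv1.symm.trans hw1
      have h2 : uw = v := hw2.symm.trans hv2
      rw [h1] at hdv; rw [h2] at hdw; omega
    · have h1 : uv = w := hv2.symm.trans hw2
      have h2 : uw = v := hw1.symm.trans hv1
      rw [h1] at hdv; rw [h2] at hdw; omega
    · exact hne' (hv1.symm.trans hw1)
  have hle : (G.verts S \ {v₀}).ncard ≤ S.ncard :=
    Set.ncard_le_ncard_of_injOn f hmaps hinj (Set.toFinite S)
  have := Set.ncard_diff_singleton_add_one hv₀ (Set.toFinite _)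
  omega

/-- In a connected `LOG` with at least one edge, every vertex is incident to an edge. -/
lemma verts_univ_eq (hconn : ∀ v w : G.V, ReflTransGen G.Adj v w) (hne : Nonempty G.E) :
    G.verts Set.univ = Set.univ := by
  apply Set.eq_univ_of_forall
  intro v
  obtain ⟨e⟩ := hne
  rcases (hconn v (G.src e)).cases_head with heq | ⟨c, ⟨f, hf⟩, _⟩
  · rw [heq]; exact src_mem_verts trivial
  · rcases hf with ⟨h1, _⟩ | ⟨_, h2⟩
    · exact ⟨f, trivial, Or.inl h1⟩
    · exact ⟨f, trivial, Or.inr h2⟩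

/-- There is an edge outside `S` touching the vertex set of `S`. -/
lemma touch (hconn : G.ConnOn Set.univ) {S : Set G.E} (hSv : (G.verts S).Nonempty)
    (hSu : S ≠ Set.univ) : ∃ e, e ∉ S ∧ (G.src e ∈ G.verts S ∨ G.tgt e ∈ G.verts S) := by
  obtain ⟨e₁, he₁⟩ : ∃ e, e ∉ S := by
    by_contra h
    push_neg at h
    exact hSu (Set.eq_univ_of_forall h)
  obtain ⟨b, hb⟩ := hSv
  have ha : G.src e₁ ∈ G.verts Set.univ := src_mem_verts trivial
  have hbu : b ∈ G.verts Set.univ := verts_mono (Set.subset_univ S) hb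
  have hrtg := hconn _ ha _ hbu
  have claim : ∀ a : G.V, ReflTransGen (G.AdjOn Set.univ) a b →
      a ∈ G.verts S ∨ ∃ e, e ∉ S ∧ (G.src e ∈ G.verts S ∨ G.tgt e ∈ G.verts S) := by
    intro a h
    induction h using ReflTransGen.head_induction_on with
    | refl => exact Or.inl hb
    | head hstep _ ih =>
      rcases ih with hc | hc
      · rename_i a' c _
        obtain ⟨f, -, hor⟩ := hstep
        by_cases hfS : f ∈ S
        · rcases hor with ⟨h1, _⟩ | ⟨_, h2⟩
          · exact Or.inl ⟨f, hfS, Or.inl h1⟩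
          · exact Or.inl ⟨f, hfS, Or.inr h2⟩
        · rcases hor with ⟨_, h2⟩ | ⟨h1, _⟩
          · exact Or.inr ⟨f, hfS, Or.inr (by rw [h2]; exact hc)⟩
          · exact Or.inr ⟨f, hfS, Or.inl (by rw [h1]; exact hc)⟩
      · exact Or.inr hc
  rcases claim _ hrtg with h | h
  · exact ⟨e₁, he₁, Or.inl h⟩
  · exact h

/-- Exact count: in a tree, a connected nonempty edge set spans exactly one more
vertex than edges. -/
lemma count_of_isTree (hT : G.IsTree) :
    ∀ S : Set G.E, S.Nonempty → G.ConnOn S → (G.verts S).ncard = S.ncard + 1 := by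
  classical
  obtain ⟨hV, hE, hneV, hconn, hloop, hsimp, hcard⟩ := hT
  have hconn' : G.ConnOn Set.univ := by
    intro v _ w _
    exact ReflTransGen.mono (fun a b ⟨e, h⟩ => ⟨e, trivial, h⟩) _ _ (hconn v w)
  suffices H : ∀ k, ∀ S : Set G.E, Sᶜ.ncard = k → S.Nonempty → G.ConnOn S →
      (G.verts S).ncard = S.ncard + 1 by
    exact fun S h1 h2 => H _ S rfl h1 h2
  intro k
  induction k using Nat.strong_induction_on with
  | _ k IH =>
  intro S hk hne hconnS
  by_cases hSu : S = Set.univ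
  · subst hSu
    rw [verts_univ_eq hconn ⟨hne.some⟩, Set.ncard_univ, Set.ncard_univ, hcard]
  · obtain ⟨e, heS, hev⟩ := touch hconn' ⟨_, src_mem_verts hne.some_mem⟩ hSu
    have hconn2 : G.ConnOn (insert e S) := connOn_insert hconnS hev
    have hklt : (insert e S)ᶜ.ncard < k := by
      have h1 : (insert e S)ᶜ = Sᶜ \ {e} := by
        ext f; simp [Set.mem_insert_iff, and_comm]
      have h2 : e ∈ Sᶜ := heS
      rw [h1]
      have := Set.ncard_diff_singleton_lt_of_mem h2 (Set.toFinite _)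
      omega
    have hIH := IH _ hklt (insert e S) rfl (Set.insert_nonempty e S) hconn2
    rw [Set.ncard_insert_of_notMem heS (Set.toFinite S)] at hIH
    have hupper := ncard_verts_le hV hE hne hconnS
    -- verts (insert e S) is within (verts S) plus one vertex
    have hlow : (G.verts (insert e S)).ncard ≤ (G.verts S).ncard + 1 := by
      rcases hev with h | h
      · have hsub : G.verts (insert e S) ⊆ insert (G.tgt e) (G.verts S) := by
          rw [verts_insert]
          rintro v ((hv | hv) | hv)
          · exact Or.inr (hv ▸ h)
          · exact Or.inl hv
          · exact Or.inr hv
        calc (G.verts (insert e S)).ncard ≤ (insert (G.tgt e) (G.verts S)).ncard :=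
              Set.ncard_le_ncard hsub (Set.toFinite _)
          _ ≤ (G.verts S).ncard + 1 := Set.ncard_insert_le _ _
      · have hsub : G.verts (insert e S) ⊆ insert (G.src e) (G.verts S) := by
          rw [verts_insert]
          rintro v ((hv | hv) | hv)
          · exact Or.inl hv
          · exact Or.inr (hv ▸ h)
          · exact Or.inr hv
        calc (G.verts (insert e S)).ncard ≤ (insert (G.src e) (G.verts S)).ncard :=
              Set.ncard_le_ncard hsub (Set.toFinite _)
          _ ≤ (G.verts S).ncard + 1 := Set.ncard_insert_le _ _
    omega

end LOG

namespace LOG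

open Relation Set

/-- The invariant carried through the collapsing process. -/
structure Good (G : LOG) : Prop where
  finV : Finite G.V
  finE : Finite G.E
  neE : Nonempty G.E
  conn : G.ConnOn Set.univ
  count : ∀ S : Set G.E, S.Nonempty → G.ConnOn S → (G.verts S).ncard = S.ncard + 1
  labmem : ∀ e, G.lab e ∈ G.verts Set.univ
  comp : G.Compressed
  inj : G.Inj
  br : G.BoundaryReduced

variable {G : LOG}

lemma Good.src_ne_tgt (hG : Good G) (e : G.E) : G.src e ≠ G.tgt e := by
  haveI := hG.finV
  have h1 : ∀ v, v ∈ G.verts {e} → ReflTransGen (G.AdjOn {e}) (G.src e) v := by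
    rintro v ⟨f, rfl, h | h⟩
    · rw [← h]
    · rw [← h]
      exact ReflTransGen.single ⟨f, rfl, Or.inl ⟨rfl, rfl⟩⟩
  have hconn : G.ConnOn {e} := fun v hv w hw => (rtg_symm (h1 v hv)).trans (h1 w hw)
  have hcnt := hG.count {e} ⟨e, rfl⟩ hconn
  rw [Set.ncard_singleton] at hcnt
  intro heq
  have hsub : G.verts {e} ⊆ {G.src e} := by
    rintro v ⟨f, rfl, h | h⟩
    · exact h.symm
    · rw [heq]; exact h.symm
  have := Set.ncard_le_ncard hsub (Set.toFinite _)
  rw [Set.ncard_singleton] at this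
  omega

lemma exists_max (hE : Finite G.E) (hnp : ¬ G.Prime) : ∃ S, G.MaxProperSubLOT S := by
  unfold LOG.Prime at hnp
  push_neg at hnp
  haveI := hE
  obtain ⟨S, hSmem, hmax⟩ := Set.Finite.exists_maximalFor id {S | G.ProperSubLOT S}
    (Set.toFinite _) hnp
  exact ⟨S, hSmem, fun T hT hsub => Set.Subset.antisymm hsub (hmax hT hsub)⟩

lemma exists_x (hG : Good G) {S : Set G.E} (hsub : G.IsSubLOT S) :
    ∃ x ∈ G.verts S, ∀ e ∈ S, G.lab e ≠ x := by
  haveI := hG.finV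
  haveI := hG.finE
  by_contra h
  push_neg at h
  have hsubim : G.verts S ⊆ G.lab '' S := by
    intro v hv
    obtain ⟨e, he, hlab⟩ := h v hv
    exact ⟨e, he, hlab⟩
  have h1 : (G.verts S).ncard ≤ (G.lab '' S).ncard :=
    Set.ncard_le_ncard hsubim (Set.toFinite _)
  have h2 : (G.lab '' S).ncard ≤ S.ncard := Set.ncard_image_le (Set.toFinite _)
  have h3 := hG.count S hsub.1 hsub.2.1
  omega

section Collapse

variable {S : Set G.E} {x : G.V}

lemma collapseMap_of_mem {v : G.V} (hv : v ∈ G.verts S) : G.collapseMap S x v = x := by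
  unfold collapseMap
  split
  · rfl
  · exact absurd hv (by assumption)

lemma collapseMap_of_not_mem {v : G.V} (hv : v ∉ G.verts S) : G.collapseMap S x v = v := by
  unfold collapseMap
  split
  · exact absurd (by assumption) hv
  · rfl

lemma lab_image (hG : Good G) (hsub : G.IsSubLOT S) (hx : x ∈ G.verts S)
    (hxlab : ∀ e ∈ S, G.lab e ≠ x) : G.lab '' S = G.verts S \ {x} := by
  haveI := hG.finV
  haveI := hG.finE
  apply Set.eq_of_subset_of_ncard_le
  · rintro v ⟨e, he, rfl⟩
    exact ⟨hsub.2.2 e he, hxlab e he⟩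
  · have h1 : (G.lab '' S).ncard = S.ncard :=
      Set.ncard_image_of_injOn (fun a _ b _ hab => hG.inj a b hab)
    have h2 : (G.verts S \ {x}).ncard = (G.verts S).ncard - 1 :=
      Set.ncard_diff_singleton_of_mem hx
    have h3 := hG.count S hsub.1 hsub.2.1
    omega
  · exact Set.toFinite _

lemma labfix (hG : Good G) (hsub : G.IsSubLOT S) (hx : x ∈ G.verts S)
    (hxlab : ∀ e ∈ S, G.lab e ≠ x) :
    ∀ e, e ∉ S → G.lab e ∈ G.verts S → G.lab e = x := by
  intro e he hm
  by_contra hne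
  have hmem : G.lab e ∈ G.verts S \ {x} := ⟨hm, hne⟩
  rw [← lab_image hG hsub hx hxlab] at hmem
  obtain ⟨f, hf, hlab⟩ := hmem
  exact he ((hG.inj f e hlab) ▸ hf)

lemma collapse_lab_eq (hG : Good G) (hsub : G.IsSubLOT S) (hx : x ∈ G.verts S)
    (hxlab : ∀ e ∈ S, G.lab e ≠ x) (e : (G.collapse S x).E) :
    (G.collapse S x).lab e = G.lab e.1 := by
  show G.collapseMap S x (G.lab e.1) = G.lab e.1
  by_cases h : G.lab e.1 ∈ G.verts S
  · rw [collapseMap_of_mem h, labfix hG hsub hx hxlab e.1 e.2 h]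
  · exact collapseMap_of_not_mem h

lemma x_mem_vertsH (hG : Good G) (hx : x ∈ G.verts S) (hSu : S ≠ Set.univ) :
    x ∈ (G.collapse S x).verts Set.univ := by
  obtain ⟨g, hgS, hor⟩ := touch hG.conn ⟨x, hx⟩ hSu
  refine ⟨⟨g, hgS⟩, trivial, ?_⟩
  rcases hor with h | h
  · exact Or.inl (collapseMap_of_mem h)
  · exact Or.inr (collapseMap_of_mem h)

lemma mem_vertsH_ne_x (hx : x ∈ G.verts S) {S' : Set (G.collapse S x).E} {v : G.V}
    (hv : v ∈ (G.collapse S x).verts S') (hne : v ≠ x) :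
    v ∉ G.verts S ∧ v ∈ G.verts (Subtype.val '' S') := by
  obtain ⟨e, he, hor⟩ := hv
  have key : ∀ p, G.collapseMap S x p = v → p = v ∧ v ∉ G.verts S := by
    intro p hp
    by_cases hpS : p ∈ G.verts S
    · rw [collapseMap_of_mem hpS] at hp
      exact absurd hp.symm hne
    · rw [collapseMap_of_not_mem hpS] at hp
      subst hp
      exact ⟨rfl, hpS⟩
  rcases hor with h | h
  · obtain ⟨h1, h2⟩ := key _ h
    exact ⟨h2, ⟨e.1, ⟨e, he, rfl⟩, Or.inl h1⟩⟩
  · obtain ⟨h1, h2⟩ := key _ h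
    exact ⟨h2, ⟨e.1, ⟨e, he, rfl⟩, Or.inr h1⟩⟩

lemma cm_mem (hx : x ∈ G.verts S) {S' : Set (G.collapse S x).E}
    (hxin : x ∈ (G.collapse S x).verts S') {v : G.V}
    (hv : v ∈ G.verts (Subtype.val '' S' ∪ S)) :
    G.collapseMap S x v ∈ (G.collapse S x).verts S' := by
  rw [verts_union] at hv
  rcases hv with hv | hv
  · obtain ⟨f, ⟨e, he, rfl⟩, hor⟩ := hv
    rcases hor with h | h
    · exact ⟨e, he, Or.inl (congrArg (G.collapseMap S x) h)⟩
    · exact ⟨e, he, Or.inr (congrArg (G.collapseMap S x) h)⟩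
  · rw [collapseMap_of_mem hv]
    exact hxin

lemma proj_rtg (hx : x ∈ G.verts S) {a b : G.V}
    (h : ReflTransGen (G.AdjOn Set.univ) a b) :
    ReflTransGen ((G.collapse S x).AdjOn Set.univ)
      (G.collapseMap S x a) (G.collapseMap S x b) := by
  induction h with
  | refl => exact ReflTransGen.refl
  | tail hab hbc ih =>
    obtain ⟨f, -, hor⟩ := hbc
    by_cases hfS : f ∈ S
    · rcases hor with ⟨h1, h2⟩ | ⟨h1, h2⟩
      · have hb : G.src f ∈ G.verts S := src_mem_verts hfS
        have hc : G.tgt f ∈ G.verts S := tgt_mem_verts hfS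
        rw [h1] at hb; rw [h2] at hc
        have heq : G.collapseMap S x _ = G.collapseMap S x _ :=
          (collapseMap_of_mem hc).trans (collapseMap_of_mem hb).symm
        rw [heq]
        exact ih
      · have hb : G.tgt f ∈ G.verts S := tgt_mem_verts hfS
        have hc : G.src f ∈ G.verts S := src_mem_verts hfS
        rw [h2] at hb; rw [h1] at hc
        have heq : G.collapseMap S x _ = G.collapseMap S x _ :=
          (collapseMap_of_mem hc).trans (collapseMap_of_mem hb).symm
        rw [heq]
        exact ih
    · refine ih.tail ⟨⟨f, hfS⟩, trivial, ?_⟩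
      rcases hor with ⟨h1, h2⟩ | ⟨h1, h2⟩
      · exact Or.inl ⟨congrArg (G.collapseMap S x) h1, congrArg (G.collapseMap S x) h2⟩
      · exact Or.inr ⟨congrArg (G.collapseMap S x) h1, congrArg (G.collapseMap S x) h2⟩

lemma connH_univ (hG : Good G) (hx : x ∈ G.verts S) :
    (G.collapse S x).ConnOn Set.univ := by
  intro v hv w hw
  obtain ⟨ev, -, hove⟩ := hv
  obtain ⟨ew, -, howe⟩ := hw
  have hv' : ∃ p, p ∈ G.verts Set.univ ∧ G.collapseMap S x p = v := by
    rcases hove with h | h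
    · exact ⟨G.src ev.1, src_mem_verts trivial, h⟩
    · exact ⟨G.tgt ev.1, tgt_mem_verts trivial, h⟩
  have hw' : ∃ q, q ∈ G.verts Set.univ ∧ G.collapseMap S x q = w := by
    rcases howe with h | h
    · exact ⟨G.src ew.1, src_mem_verts trivial, h⟩
    · exact ⟨G.tgt ew.1, tgt_mem_verts trivial, h⟩
  obtain ⟨p, hp, rfl⟩ := hv'
  obtain ⟨q, hq, rfl⟩ := hw'
  exact proj_rtg hx (hG.conn p hp q hq)

lemma glue_subset (hSconn : G.ConnOn S) (hx : x ∈ G.verts S) {T : Set G.E} (hsub : S ⊆ T) :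
    ∀ u w, u ∈ G.verts T → w ∈ G.verts T →
      G.collapseMap S x u = G.collapseMap S x w → ReflTransGen (G.AdjOn T) u w := by
  intro u w _ _ h
  by_cases huw : u = w
  · subst huw; exact ReflTransGen.refl
  · have hmem : u ∈ G.verts S ∧ w ∈ G.verts S := by
      by_cases h1 : u ∈ G.verts S <;> by_cases h2 : w ∈ G.verts S
      · exact ⟨h1, h2⟩
      · rw [collapseMap_of_mem h1, collapseMap_of_not_mem h2] at h
        exact absurd (h ▸ hx) h2
      · rw [collapseMap_of_not_mem h1, collapseMap_of_mem h2] at h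
        exact absurd (h ▸ hx : u ∈ G.verts S) h1
      · rw [collapseMap_of_not_mem h1, collapseMap_of_not_mem h2] at h
        exact absurd h huw
    exact rtg_mono hsub (hSconn u hmem.1 w hmem.2)

lemma lift_conn {S' : Set (G.collapse S x).E} {T : Set G.E}
    (hT : ∀ e : (G.collapse S x).E, e ∈ S' → e.1 ∈ T)
    (glue : ∀ u w, u ∈ G.verts T → w ∈ G.verts T →
      G.collapseMap S x u = G.collapseMap S x w → ReflTransGen (G.AdjOn T) u w)
    {a b : G.V} (hab : ReflTransGen ((G.collapse S x).AdjOn S') a b) :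
    ∀ u w, u ∈ G.verts T → w ∈ G.verts T → G.collapseMap S x u = a →
      G.collapseMap S x w = b → ReflTransGen (G.AdjOn T) u w := by
  induction hab with
  | refl =>
    intro u w hu hw h1 h2
    exact glue u w hu hw (h1.trans h2.symm)
  | tail hab hbc ih =>
    intro u w hu hw h1 h2
    obtain ⟨e, heS', hor⟩ := hbc
    have heT := hT e heS'
    rcases hor with ⟨hsb, htc⟩ | ⟨hsc, htb⟩
    · have part1 := ih u (G.src e.1) hu (src_mem_verts heT) h1 hsb
      have part2 := glue (G.tgt e.1) w (tgt_mem_verts heT) hw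
        (htc.trans h2.symm)
      exact (part1.tail ⟨e.1, heT, Or.inl ⟨rfl, rfl⟩⟩).trans part2
    · have part1 := ih u (G.tgt e.1) hu (tgt_mem_verts heT) h1 htb
      have part2 := glue (G.src e.1) w (src_mem_verts heT) hw (hsc.trans h2.symm)
      exact (part1.tail ⟨e.1, heT, Or.inr ⟨rfl, rfl⟩⟩).trans part2

end Collapse

end LOG

namespace LOG

open Relation Set

variable {G : LOG}

section Collapse

variable {S : Set G.E} {x : G.V}

lemma count_H (hG : Good G) (hsub : G.IsSubLOT S) (hx : x ∈ G.verts S) :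
    ∀ S' : Set (G.collapse S x).E, S'.Nonempty → (G.collapse S x).ConnOn S' →
      ((G.collapse S x).verts S').ncard = S'.ncard + 1 := by
  haveI := hG.finV
  haveI := hG.finE
  haveI : Finite (G.collapse S x).V := hG.finV
  intro S' hne' hconn'
  set Sv : Set G.E := Subtype.val '' S' with hSvdef
  have hSvcard : Sv.ncard = S'.ncard := Set.ncard_image_of_injective _ Subtype.val_injective
  by_cases hxin : x ∈ (G.collapse S x).verts S'
  · have hTconn : G.ConnOn (Sv ∪ S) := by
      intro v hv w hw
      exact lift_conn (fun e he => Or.inl ⟨e, he, rfl⟩)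
        (glue_subset hsub.2.1 hx Set.subset_union_right)
        (hconn' _ (cm_mem hx hxin hv) _ (cm_mem hx hxin hw)) v w hv hw rfl rfl
    have hTne : (Sv ∪ S).Nonempty := by
      obtain ⟨e, he⟩ := hne'
      exact ⟨e.1, Or.inl ⟨e, he, rfl⟩⟩
    have hTcount := hG.count (Sv ∪ S) hTne hTconn
    have hdisj : Disjoint Sv S := by
      rw [Set.disjoint_left]
      rintro f ⟨e, _, rfl⟩ hfS
      exact e.2 hfS
    have hTcard : (Sv ∪ S).ncard = S'.ncard + S.ncard := by
      rw [Set.ncard_union_eq hdisj (Set.toFinite _) (Set.toFinite _), hSvcard]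
    have hVT : G.verts (Sv ∪ S) = ((G.collapse S x).verts S' \ {x}) ∪ G.verts S := by
      ext v
      constructor
      · intro hv
        rw [verts_union] at hv
        rcases hv with hv | hv
        · by_cases hvS : v ∈ G.verts S
          · exact Or.inr hvS
          · left
            obtain ⟨f, ⟨e, he, rfl⟩, hor⟩ := hv
            have hvne : v ≠ x := fun h => hvS (h ▸ hx)
            refine ⟨⟨e, he, ?_⟩, hvne⟩
            rcases hor with h | h
            · exact Or.inl ((congrArg (G.collapseMap S x) h).trans (collapseMap_of_not_mem hvS))
            · exact Or.inr ((congrArg (G.collapseMap S x) h).trans (collapseMap_of_not_mem hvS))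
        · exact Or.inr hv
      · rintro (⟨hv1, hv2⟩ | hv)
        · rw [verts_union]
          exact Or.inl (mem_vertsH_ne_x hx hv1 hv2).2
        · rw [verts_union]
          exact Or.inr hv
    have hdisjV : Disjoint ((G.collapse S x).verts S' \ {x}) (G.verts S) := by
      refine Set.disjoint_left.mpr ?_
      rintro v ⟨hv1, hv2⟩ hvS
      exact (mem_vertsH_ne_x hx hv1 hv2).1 hvS
    have hxcard := Set.ncard_diff_singleton_add_one hxin (Set.toFinite _)
    have hScount := hG.count S hsub.1 hsub.2.1
    rw [hVT] at hTcount
    erw [Set.ncard_union_eq hdisjV (Set.toFinite _) (Set.toFinite _)] at hTcount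
    have key : (((G.collapse S x).verts S' : Set G.V) \ {x}).ncard + (G.verts S).ncard =
        (Sv ∪ S).ncard + 1 := hTcount
    have hx2 : (((G.collapse S x).verts S' : Set G.V) \ {x}).ncard + 1 =
        ((G.collapse S x).verts S' : Set G.V).ncard := hxcard
    show ((G.collapse S x).verts S' : Set G.V).ncard = S'.ncard + 1
    omega
  · have hnotouch : ∀ e : (G.collapse S x).E, e ∈ S' →
        G.src e.1 ∉ G.verts S ∧ G.tgt e.1 ∉ G.verts S := by
      intro e he
      constructor <;> intro hmem
      · exact hxin ⟨e, he, Or.inl (collapseMap_of_mem hmem)⟩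
      · exact hxin ⟨e, he, Or.inr (collapseMap_of_mem hmem)⟩
    have hVeq : G.verts Sv = (G.collapse S x).verts S' := by
      ext v
      constructor
      · rintro ⟨f, ⟨e, he, rfl⟩, hor⟩
        rcases hor with h | h
        · exact ⟨e, he, Or.inl ((congrArg (G.collapseMap S x) h).trans
            (collapseMap_of_not_mem (h ▸ (hnotouch e he).1)))⟩
        · exact ⟨e, he, Or.inr ((congrArg (G.collapseMap S x) h).trans
            (collapseMap_of_not_mem (h ▸ (hnotouch e he).2)))⟩
      · rintro ⟨e, he, hor⟩
        rcases hor with h | h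
        · have h' : G.collapseMap S x (G.src e.1) = v := h
          rw [collapseMap_of_not_mem (hnotouch e he).1] at h'
          exact ⟨e.1, ⟨e, he, rfl⟩, Or.inl h'⟩
        · have h' : G.collapseMap S x (G.tgt e.1) = v := h
          rw [collapseMap_of_not_mem (hnotouch e he).2] at h'
          exact ⟨e.1, ⟨e, he, rfl⟩, Or.inr h'⟩
    have hconnSv : G.ConnOn Sv := by
      intro v hv w hw
      have hv' : v ∈ (G.collapse S x).verts S' := hVeq ▸ hv
      have hw' : w ∈ (G.collapse S x).verts S' := hVeq ▸ hw
      refine ReflTransGen.mono (p := G.AdjOn Sv) ?_ _ _ (hconn' v hv' w hw')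
      rintro a b ⟨e, he, hor⟩
      rcases hor with ⟨h1, h2⟩ | ⟨h1, h2⟩
      · have h1' : G.collapseMap S x (G.src e.1) = a := h1
        have h2' : G.collapseMap S x (G.tgt e.1) = b := h2
        rw [collapseMap_of_not_mem (hnotouch e he).1] at h1'
        rw [collapseMap_of_not_mem (hnotouch e he).2] at h2'
        exact ⟨e.1, ⟨e, he, rfl⟩, Or.inl ⟨h1', h2'⟩⟩
      · have h1' : G.collapseMap S x (G.src e.1) = b := h1
        have h2' : G.collapseMap S x (G.tgt e.1) = a := h2
        rw [collapseMap_of_not_mem (hnotouch e he).1] at h1'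
        rw [collapseMap_of_not_mem (hnotouch e he).2] at h2'
        exact ⟨e.1, ⟨e, he, rfl⟩, Or.inr ⟨h1', h2'⟩⟩
    have hSvne : Sv.Nonempty := by
      obtain ⟨e, he⟩ := hne'
      exact ⟨e.1, e, he, rfl⟩
    have := hG.count Sv hSvne hconnSv
    rw [hVeq, hSvcard] at this
    exact this

lemma no_lab_x_out (hG : Good G) (hS : G.MaxProperSubLOT S) (hx : x ∈ G.verts S) :
    ∀ e, e ∉ S → G.lab e = x → (G.src e ∈ G.verts S ∨ G.tgt e ∈ G.verts S) → False := by
  intro e he hlab hev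
  haveI := hG.finV
  haveI := hG.finE
  obtain ⟨⟨hSne, hSconn, hSlab⟩, hSu⟩ := hS.1
  have hconnT : G.ConnOn (insert e S) := connOn_insert hSconn hev
  have hsubT : G.IsSubLOT (insert e S) := by
    refine ⟨Set.insert_nonempty _ _, hconnT, ?_⟩
    intro f hf
    rcases Set.mem_insert_iff.1 hf with rfl | hf2
    · rw [hlab]
      exact verts_mono (Set.subset_insert f S) hx
    · exact verts_mono (Set.subset_insert e S) (hSlab f hf2)
  by_cases hTu : insert e S = Set.univ
  · by_cases hboth : G.src e ∈ G.verts S ∧ G.tgt e ∈ G.verts S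
    · have hTcount := hG.count _ (Set.insert_nonempty e S) hconnT
      have hScount := hG.count S hSne hSconn
      have hVeq : G.verts (insert e S) = G.verts S := by
        rw [verts_insert, Set.union_eq_right]
        rintro v (rfl | h)
        · exact hboth.1
        · rw [Set.mem_singleton_iff] at h
          rw [h]
          exact hboth.2
      rw [hVeq, hScount, Set.ncard_insert_of_notMem he (Set.toFinite _)] at hTcount
      omega
    · obtain ⟨b, hbS, hbe⟩ : ∃ b, b ∉ G.verts S ∧ (G.src e = b ∨ G.tgt e = b) := by
        rcases hev with h | h
        · by_cases h2 : G.tgt e ∈ G.verts S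
          · exact absurd ⟨h, h2⟩ hboth
          · exact ⟨G.tgt e, h2, Or.inr rfl⟩
        · by_cases h2 : G.src e ∈ G.verts S
          · exact absurd ⟨h2, h⟩ hboth
          · exact ⟨G.src e, h2, Or.inl rfl⟩
      have hleaf : G.IsLeaf b := by
        have hset : {f | G.src f = b ∨ G.tgt f = b} = {e} := by
          ext f
          simp only [Set.mem_setOf_eq, Set.mem_singleton_iff]
          constructor
          · intro hor
            by_cases hfS : f ∈ S
            · exfalso
              rcases hor with h | h
              · exact hbS (h ▸ src_mem_verts hfS)
              · exact hbS (h ▸ tgt_mem_verts hfS)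
            · have hmem : f ∈ insert e S := by rw [hTu]; trivial
              rcases Set.mem_insert_iff.1 hmem with h | h
              · exact h
              · exact absurd h hfS
          · rintro rfl
            exact hbe
        show ({f | G.src f = b ∨ G.tgt f = b}).ncard = 1
        rw [hset, Set.ncard_singleton]
      obtain ⟨f, hf⟩ := hG.br b hleaf
      by_cases hfS : f ∈ S
      · exact hbS (hf ▸ hSlab f hfS)
      · have hmem : f ∈ insert e S := by rw [hTu]; trivial
        rcases Set.mem_insert_iff.1 hmem with rfl | h
        · have hbx : b = x := hf.symm.trans hlab
          exact hbS (by rw [hbx]; exact hx)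
        · exact absurd h hfS
  · have heq := hS.2 _ ⟨hsubT, hTu⟩ (Set.subset_insert e S)
    exact he (by rw [heq]; exact Set.mem_insert e S)

lemma comp_H (hG : Good G) (hS : G.MaxProperSubLOT S) (hx : x ∈ G.verts S)
    (hxlab : ∀ e ∈ S, G.lab e ≠ x) : (G.collapse S x).Compressed := by
  intro e
  have hlabe := collapse_lab_eq hG hS.1.1 hx hxlab e
  constructor
  · intro heq
    rw [hlabe] at heq
    have heq' : G.lab e.1 = G.collapseMap S x (G.src e.1) := heq
    by_cases hsrc : G.src e.1 ∈ G.verts S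
    · rw [collapseMap_of_mem hsrc] at heq'
      exact no_lab_x_out hG hS hx e.1 e.2 heq' (Or.inl hsrc)
    · rw [collapseMap_of_not_mem hsrc] at heq'
      exact (hG.comp e.1).1 heq'
  · intro heq
    rw [hlabe] at heq
    have heq' : G.lab e.1 = G.collapseMap S x (G.tgt e.1) := heq
    by_cases htgt : G.tgt e.1 ∈ G.verts S
    · rw [collapseMap_of_mem htgt] at heq'
      exact no_lab_x_out hG hS hx e.1 e.2 heq' (Or.inr htgt)
    · rw [collapseMap_of_not_mem htgt] at heq'
      exact (hG.comp e.1).2 heq'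

lemma good_H (hG : Good G) (hS : G.MaxProperSubLOT S) (hx : x ∈ G.verts S)
    (hxlab : ∀ e ∈ S, G.lab e ≠ x) (hbr : (G.collapse S x).BoundaryReduced) :
    Good (G.collapse S x) := by
  haveI := hG.finE
  refine ⟨hG.finV, Subtype.finite, ?_, connH_univ hG hx, count_H hG hS.1.1 hx, ?_,
    comp_H hG hS hx hxlab, ?_, hbr⟩
  · obtain ⟨e, he⟩ := (Set.ne_univ_iff_exists_notMem S).mp hS.1.2
    exact ⟨⟨e, he⟩⟩
  · intro e
    rw [collapse_lab_eq hG hS.1.1 hx hxlab e]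
    by_cases h : G.lab e.1 ∈ G.verts S
    · rw [labfix hG hS.1.1 hx hxlab e.1 e.2 h]
      exact x_mem_vertsH hG hx hS.1.2
    · obtain ⟨f, -, hor⟩ := hG.labmem e.1
      by_cases hfS : f ∈ S
      · exfalso
        rcases hor with h1 | h1
        · exact h (h1 ▸ src_mem_verts hfS)
        · exact h (h1 ▸ tgt_mem_verts hfS)
      · refine ⟨⟨f, hfS⟩, trivial, ?_⟩
        rcases hor with h1 | h1
        · exact Or.inl (show G.collapseMap S x (G.src f) = G.lab e.1 by
            rw [h1]; exact collapseMap_of_not_mem h)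
        · exact Or.inr (show G.collapseMap S x (G.tgt f) = G.lab e.1 by
            rw [h1]; exact collapseMap_of_not_mem h)
  · intro e e' heq
    rw [collapse_lab_eq hG hS.1.1 hx hxlab e, collapse_lab_eq hG hS.1.1 hx hxlab e'] at heq
    exact Subtype.ext (hG.inj _ _ heq)

lemma no_decomp (hG : Good G) (hS : G.MaxProperSubLOT S) (hx : x ∈ G.verts S)
    (hxlab : ∀ e ∈ S, G.lab e ≠ x) : ¬ (G.collapse S x).FreelyDecomposes := by
  rintro ⟨SL, SR, y, hSL, hSR, huniv, -⟩
  have main : ∀ SL : Set (G.collapse S x).E, (G.collapse S x).ProperSubLOT SL →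
      x ∈ (G.collapse S x).verts SL → False := by
    intro SL hSL hxin
    obtain ⟨⟨hne', hconn', hlab'⟩, hne_univ⟩ := hSL
    have hUconn : G.ConnOn (Subtype.val '' SL ∪ S) := by
      intro v hv w hw
      exact lift_conn (fun e he => Or.inl ⟨e, he, rfl⟩)
        (glue_subset hS.1.1.2.1 hx Set.subset_union_right)
        (hconn' _ (cm_mem hx hxin hv) _ (cm_mem hx hxin hw)) v w hv hw rfl rfl
    have hUsub : G.IsSubLOT (Subtype.val '' SL ∪ S) := by
      refine ⟨?_, hUconn, ?_⟩
      · obtain ⟨e, he⟩ := hne'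
        exact ⟨e.1, Or.inl ⟨e, he, rfl⟩⟩
      · rintro f (⟨e, he, rfl⟩ | hfS)
        · have hl : (G.collapse S x).lab e ∈ (G.collapse S x).verts SL := hlab' e he
          rw [collapse_lab_eq hG hS.1.1 hx hxlab e] at hl
          by_cases hlS : G.lab e.1 ∈ G.verts S
          · exact verts_mono Set.subset_union_right hlS
          · have hnex : G.lab e.1 ≠ x := fun h => hlS (h ▸ hx)
            exact verts_mono Set.subset_union_left (mem_vertsH_ne_x hx hl hnex).2
        · exact verts_mono Set.subset_union_right (hS.1.1.2.2 f hfS)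
    have hUne : (Subtype.val '' SL ∪ S) ≠ Set.univ := by
      obtain ⟨f, hf⟩ := (Set.ne_univ_iff_exists_notMem SL).mp hne_univ
      intro h
      have hfU : f.1 ∈ Subtype.val '' SL ∪ S := by rw [h]; trivial
      rcases hfU with ⟨e, he, hee⟩ | hfS
      · exact hf (by rwa [Subtype.val_injective hee] at he)
      · exact f.2 hfS
    have hSeqU := hS.2 _ ⟨hUsub, hUne⟩ Set.subset_union_right
    obtain ⟨e, he⟩ := hne'
    have hmem : e.1 ∈ Subtype.val '' SL ∪ S := Or.inl ⟨e, he, rfl⟩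
    rw [← hSeqU] at hmem
    exact e.2 hmem
  obtain ⟨e, -, hor⟩ := x_mem_vertsH hG hx hS.1.2
  have hmem : e ∈ SL ∪ SR := by rw [huniv]; trivial
  rcases hmem with h | h
  · exact main SL hSL ⟨e, h, hor⟩
  · exact main SR hSR ⟨e, h, hor⟩

end Collapse

end LOG



/-- A chain of collapses of maximal proper sub-LOTs (each collapsed to its unique
non-label vertex), starting at the first LOG and ending at the second. -/
inductive CollapseChain : LOG → LOG → Prop
  | refl (G : LOG) : CollapseChain G G
  | step (G H : LOG) (S : Set G.E) (x : G.V)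
      (hS : G.MaxProperSubLOT S) (hx : x ∈ G.verts S) (hxlab : ∀ e ∈ S, G.lab e ≠ x)
      (h : CollapseChain (G.collapse S x) H) : CollapseChain G H

/-- `Γ` contains a complete set of sub-LOTs: iteratively collapsing maximal proper
sub-LOTs ends at a prime injective quotient which is compressed and not just a vertex. -/
def HasCompleteSet (G : LOG) : Prop :=
  ∃ H : LOG, CollapseChain G H ∧ Nonempty H.E ∧ H.Compressed ∧ H.Prime


namespace LOG

open Relation Set

variable {G : LOG}

section Collapse

variable {S : Set G.E} {x : G.V}

lemma decomp_of_not_br (hG : Good G) (hS : G.MaxProperSubLOT S) (hx : x ∈ G.verts S)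
    (hxlab : ∀ e ∈ S, G.lab e ≠ x) (hbr : ¬ (G.collapse S x).BoundaryReduced) :
    G.FreelyDecomposes := by
  haveI := hG.finV
  haveI := hG.finE
  haveI : Finite (G.collapse S x).V := hG.finV
  haveI : Finite (G.collapse S x).E := Subtype.finite
  obtain ⟨⟨hSne, hSconn, hSlab⟩, hSu⟩ := hS.1
  have hsub : G.IsSubLOT S := ⟨hSne, hSconn, hSlab⟩
  unfold BoundaryReduced at hbr
  push_neg at hbr
  obtain ⟨v, hleaf, hnolab⟩ := hbr
  -- Step 1: the bad leaf must be the collapse point x.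
  have hvx : v = x := by
    by_contra hne
    by_cases hvS : v ∈ G.verts S
    · have hempty : {f : (G.collapse S x).E |
          (G.collapse S x).src f = v ∨ (G.collapse S x).tgt f = v} = ∅ := by
        ext f
        simp only [Set.mem_setOf_eq, Set.mem_empty_iff_false, iff_false]
        rintro (h | h)
        · have h' : G.collapseMap S x (G.src f.1) = v := h
          by_cases hm : G.src f.1 ∈ G.verts S
          · rw [collapseMap_of_mem hm] at h'
            exact hne h'.symm
          · rw [collapseMap_of_not_mem hm] at h'
            exact hm (by rw [h']; exact hvS)
        · have h' : G.collapseMap S x (G.tgt f.1) = v := h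
          by_cases hm : G.tgt f.1 ∈ G.verts S
          · rw [collapseMap_of_mem hm] at h'
            exact hne h'.symm
          · rw [collapseMap_of_not_mem hm] at h'
            exact hm (by rw [h']; exact hvS)
      have hleaf' := hleaf
      unfold IsLeaf at hleaf'
      rw [hempty] at hleaf'
      simp at hleaf'
    · have himg : Subtype.val '' {f : (G.collapse S x).E |
          (G.collapse S x).src f = v ∨ (G.collapse S x).tgt f = v} =
          {f : G.E | G.src f = v ∨ G.tgt f = v} := by
        ext f
        constructor
        · rintro ⟨e, he, rfl⟩
          rcases he with h | h
          · have h' : G.collapseMap S x (G.src e.1) = v := h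
            left
            by_cases hm : G.src e.1 ∈ G.verts S
            · rw [collapseMap_of_mem hm] at h'
              exact absurd h'.symm hne
            · rwa [collapseMap_of_not_mem hm] at h'
          · have h' : G.collapseMap S x (G.tgt e.1) = v := h
            right
            by_cases hm : G.tgt e.1 ∈ G.verts S
            · rw [collapseMap_of_mem hm] at h'
              exact absurd h'.symm hne
            · rwa [collapseMap_of_not_mem hm] at h'
        · intro hf
          have hfS : f ∉ S := by
            intro hfS
            rcases hf with h | h
            · exact hvS (h ▸ src_mem_verts hfS)
            · exact hvS (h ▸ tgt_mem_verts hfS)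
          refine ⟨⟨f, hfS⟩, ?_, rfl⟩
          rcases hf with h | h
          · exact Or.inl (show G.collapseMap S x (G.src f) = v by
              rw [h]; exact collapseMap_of_not_mem hvS)
          · exact Or.inr (show G.collapseMap S x (G.tgt f) = v by
              rw [h]; exact collapseMap_of_not_mem hvS)
      have hleafG : G.IsLeaf v := by
        show ({f : G.E | G.src f = v ∨ G.tgt f = v}).ncard = 1
        rw [← himg, Set.ncard_image_of_injective _ Subtype.val_injective]
        exact hleaf
      obtain ⟨f, hf⟩ := hG.br v hleafG
      have hfS : f ∉ S := fun hfS => hvS (hf ▸ hSlab f hfS)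
      exact hnolab ⟨f, hfS⟩ (by rw [collapse_lab_eq hG hsub hx hxlab ⟨f, hfS⟩]; exact hf)
  subst v
  -- Step 2: no edge outside S is labeled in verts S
  have hlabout : ∀ f (hf : f ∉ S), G.lab f ∉ G.verts S := by
    intro f hf hmem
    exact hnolab ⟨f, hf⟩ (by
      rw [collapse_lab_eq hG hsub hx hxlab ⟨f, hf⟩]
      exact labfix hG hsub hx hxlab f hf hmem)
  -- Step 3: the unique attaching edge e₀
  obtain ⟨e₀, hIeq⟩ := Set.ncard_eq_one.mp hleaf
  have hinc : ∀ f : (G.collapse S x).E,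
      ((G.collapse S x).src f = x ∨ (G.collapse S x).tgt f = x) ↔ f = e₀ := by
    intro f
    constructor
    · intro h
      have hmem : f ∈ {e : (G.collapse S x).E |
          (G.collapse S x).src e = x ∨ (G.collapse S x).tgt e = x} := h
      rw [hIeq] at hmem
      exact hmem
    · intro h
      have hmem : e₀ ∈ ({e₀} : Set (G.collapse S x).E) := rfl
      rw [← hIeq] at hmem
      rw [h]
      exact hmem
  have hinc' : ∀ f (hf : f ∉ S),
      (G.src f ∈ G.verts S ∨ G.tgt f ∈ G.verts S) ↔ (⟨f, hf⟩ : (G.collapse S x).E) = e₀ := by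
    intro f hf
    refine Iff.trans ?_ (hinc ⟨f, hf⟩)
    constructor
    · rintro (h | h)
      · exact Or.inl (collapseMap_of_mem h)
      · exact Or.inr (collapseMap_of_mem h)
    · rintro (h | h)
      · have h' : G.collapseMap S x (G.src f) = x := h
        left
        by_contra hm
        rw [collapseMap_of_not_mem hm] at h'
        exact hm (by rw [h']; exact hx)
      · have h' : G.collapseMap S x (G.tgt f) = x := h
        right
        by_contra hm
        rw [collapseMap_of_not_mem hm] at h'
        exact hm (by rw [h']; exact hx)
  have he₀touch : G.src e₀.1 ∈ G.verts S ∨ G.tgt e₀.1 ∈ G.verts S := by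
    rw [hinc' e₀.1 e₀.2]
    rfl
  have hnotboth : ¬ (G.src e₀.1 ∈ G.verts S ∧ G.tgt e₀.1 ∈ G.verts S) := by
    rintro ⟨h1, h2⟩
    have hconnT : G.ConnOn (insert e₀.1 S) := connOn_insert hSconn (Or.inl h1)
    have hTcount := hG.count _ (Set.insert_nonempty _ _) hconnT
    have hScount := hG.count S hSne hSconn
    have hVeq : G.verts (insert e₀.1 S) = G.verts S := by
      rw [verts_insert, Set.union_eq_right]
      rintro u (rfl | h)
      · exact h1
      · rw [Set.mem_singleton_iff] at h
        rw [h]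
        exact h2
    rw [hVeq, hScount, Set.ncard_insert_of_notMem e₀.2 (Set.toFinite _)] at hTcount
    omega
  obtain ⟨w₀, b₀, hw₀S, hb₀, hends⟩ : ∃ w b, w ∈ G.verts S ∧ b ∉ G.verts S ∧
      ((G.src e₀.1 = w ∧ G.tgt e₀.1 = b) ∨ (G.src e₀.1 = b ∧ G.tgt e₀.1 = w)) := by
    rcases he₀touch with h | h
    · by_cases h2 : G.tgt e₀.1 ∈ G.verts S
      · exact absurd ⟨h, h2⟩ hnotboth
      · exact ⟨G.src e₀.1, G.tgt e₀.1, h, h2, Or.inl ⟨rfl, rfl⟩⟩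
    · by_cases h2 : G.src e₀.1 ∈ G.verts S
      · exact absurd ⟨h2, h⟩ hnotboth
      · exact ⟨G.tgt e₀.1, G.src e₀.1, h, h2, Or.inr ⟨rfl, rfl⟩⟩
  have hkey : ∀ u, u ∈ G.verts S → u ∈ G.verts Sᶜ → u = w₀ := by
    rintro u huS ⟨f, hfc, hor⟩
    have hfc' : f ∉ S := hfc
    have hfe : (⟨f, hfc'⟩ : (G.collapse S x).E) = e₀ := by
      rw [← hinc' f hfc']
      rcases hor with h | h
      · exact Or.inl (h ▸ huS)
      · exact Or.inr (h ▸ huS)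
    have hf1 : f = e₀.1 := congrArg Subtype.val hfe
    rw [hf1] at hor
    rcases hends with ⟨hs, ht⟩ | ⟨hs, ht⟩ <;> rcases hor with h | h
    · rw [← h]; exact hs
    · exact absurd ((h.symm.trans ht) ▸ huS) hb₀
    · exact absurd ((h.symm.trans hs) ▸ huS) hb₀
    · rw [← h]; exact ht
  have hcompl_ne : (Sᶜ : Set G.E).Nonempty := by
    obtain ⟨f, hf⟩ := (Set.ne_univ_iff_exists_notMem S).mp hSu
    exact ⟨f, hf⟩
  have hw₀c : w₀ ∈ G.verts Sᶜ := by
    rcases hends with ⟨hs, ht⟩ | ⟨hs, ht⟩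
    · exact ⟨e₀.1, e₀.2, Or.inl hs⟩
    · exact ⟨e₀.1, e₀.2, Or.inr ht⟩
  have hconnc : G.ConnOn Sᶜ := by
    intro u hu w hw
    have hcm : ∀ z, z ∈ G.verts Sᶜ →
        G.collapseMap S x z ∈ (G.collapse S x).verts Set.univ := by
      rintro z ⟨f, hf, hor⟩
      rcases hor with h | h
      · exact ⟨⟨f, hf⟩, trivial, Or.inl (congrArg (G.collapseMap S x) h)⟩
      · exact ⟨⟨f, hf⟩, trivial, Or.inr (congrArg (G.collapseMap S x) h)⟩
    have hglue : ∀ p q, p ∈ G.verts Sᶜ → q ∈ G.verts Sᶜ →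
        G.collapseMap S x p = G.collapseMap S x q → ReflTransGen (G.AdjOn Sᶜ) p q := by
      intro p q hp hq h
      by_cases hpq : p = q
      · rw [hpq]
      · exfalso
        have hmem : p ∈ G.verts S ∧ q ∈ G.verts S := by
          by_cases h1 : p ∈ G.verts S <;> by_cases h2 : q ∈ G.verts S
          · exact ⟨h1, h2⟩
          · rw [collapseMap_of_mem h1, collapseMap_of_not_mem h2] at h
            exact absurd (h ▸ hx) h2
          · rw [collapseMap_of_not_mem h1, collapseMap_of_mem h2] at h
            exact absurd (h ▸ hx : p ∈ G.verts S) h1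
          · rw [collapseMap_of_not_mem h1, collapseMap_of_not_mem h2] at h
            exact absurd h hpq
        exact hpq ((hkey p hmem.1 hp).trans (hkey q hmem.2 hq).symm)
    exact lift_conn (fun e _ => e.2) hglue
      (connH_univ hG hx _ (hcm u hu) _ (hcm w hw)) u w hu hw rfl rfl
  have hsubc : G.IsSubLOT Sᶜ := by
    refine ⟨hcompl_ne, hconnc, ?_⟩
    intro f hf
    have h1 : G.lab f ∉ G.verts S := hlabout f hf
    obtain ⟨g, -, hor⟩ := hG.labmem f
    have hgS : g ∉ S := by
      intro hgS
      rcases hor with h | h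
      · exact h1 (h ▸ src_mem_verts hgS)
      · exact h1 (h ▸ tgt_mem_verts hgS)
    exact ⟨g, hgS, hor⟩
  refine ⟨S, Sᶜ, w₀, ⟨hsub, hSu⟩, ⟨hsubc, ?_⟩, Set.union_compl_self S, ?_⟩
  · intro h
    obtain ⟨f, hfS⟩ := hSne
    have : f ∈ Sᶜ := by rw [h]; trivial
    exact this hfS
  · ext u
    constructor
    · rintro ⟨h1, h2⟩
      exact hkey u h1 h2
    · rintro rfl
      exact ⟨hw₀S, hw₀c⟩

end Collapse

lemma main_lemma : ∀ n (G : LOG), Nat.card G.E = n → Good G →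
    HasCompleteSet G ∨ G.FreelyDecomposes := by
  intro n
  induction n using Nat.strong_induction_on with
  | _ n IH =>
    intro G hn hG
    by_cases hp : G.Prime
    · exact Or.inl ⟨G, CollapseChain.refl G, hG.neE, hG.comp, hp⟩
    · obtain ⟨S, hS⟩ := exists_max hG.finE hp
      obtain ⟨x, hx, hxlab⟩ := exists_x hG hS.1.1
      have hcard : Nat.card (G.collapse S x).E < n := by
        haveI := hG.finE
        have h1 : Nat.card (G.collapse S x).E = (Sᶜ : Set G.E).ncard := by
          rw [← Nat.card_coe_set_eq]
          exact Nat.card_congr (Equiv.subtypeEquivRight (fun e => Iff.rfl))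
        have h2 : (Sᶜ : Set G.E).ncard < (Set.univ : Set G.E).ncard := by
          apply Set.ncard_lt_ncard _ (Set.toFinite _)
          constructor
          · exact Set.subset_univ _
          · intro hsub
            obtain ⟨f, hf⟩ := hS.1.1.1
            have : f ∈ (Sᶜ : Set G.E) := hsub trivial
            exact this hf
        calc Nat.card (G.collapse S x).E = (Sᶜ : Set G.E).ncard := h1
          _ < (Set.univ : Set G.E).ncard := h2
          _ = Nat.card G.E := Set.ncard_univ _
          _ = n := hn
      by_cases hbr : (G.collapse S x).BoundaryReduced
      · have hGH : Good (G.collapse S x) := good_H hG hS hx hxlab hbr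
        rcases IH _ hcard (G.collapse S x) rfl hGH with ⟨H', hchain, hne, hcomp, hprime⟩ | hdec
        · exact Or.inl ⟨H', CollapseChain.step G H' S x hS hx hxlab hchain, hne, hcomp, hprime⟩
        · exact absurd hdec (no_decomp hG hS hx hxlab)
      · exact Or.inr (decomp_of_not_br hG hS hx hxlab hbr)

end LOG

/-- Let `Γ` be a reduced injective LOT that is not prime.  Then either
`Γ` contains a complete set of sub-LOTs, or `Γ` freely decomposes as `Γ = Γ_L ∪ Γ_R` with
`Γ_L, Γ_R` proper sub-LOTs intersecting in a single vertex. -/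
theorem complete_set_or_free_decomposition
    (G : LOG) (hT : G.IsTree) (hI : G.Inj) (hR : G.Reduced) (hnp : ¬ G.Prime) :
    HasCompleteSet G ∨ G.FreelyDecomposes := by
  obtain ⟨hV, hE, hneV, hconn, hloop, hsimp, hcard⟩ := hT
  have hconn' : G.ConnOn Set.univ := fun v _ w _ =>
    Relation.ReflTransGen.mono (fun a b ⟨e, h⟩ => ⟨e, trivial, h⟩) _ _ (hconn v w)
  have hneE : Nonempty G.E := by
    have hnp' := hnp
    unfold LOG.Prime at hnp'
    push_neg at hnp'
    obtain ⟨S, hSp⟩ := hnp'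
    obtain ⟨e, _⟩ := hSp.1.1
    exact ⟨e⟩
  have hcount := LOG.count_of_isTree ⟨hV, hE, hneV, hconn, hloop, hsimp, hcard⟩
  have hlabmem : ∀ e, G.lab e ∈ G.verts Set.univ := by
    intro e
    rw [LOG.verts_univ_eq hconn hneE]
    trivial
  exact LOG.main_lemma _ G rfl ⟨hV, hE, hneE, hconn', hcount, hlabmem, hR.1, hI, hR.2⟩
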